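/- Suppose t ∉ spec(A) and the approximation errors satisfy Σ_{j=1}^m ε_j² < 𝔡_1(t)²/6, where ε_j = ‖(A−t)(w_j − φ_j)‖ and φ_j are orthonormal eigenvectors of |A−t| with |A−t|φ_j = 𝔡_j(t)φ_j, w_j ∈ L. Then F_L^j(t) − 𝔡_j(t) ≤ 3 (𝔡_j(t)/𝔡_1(t)²) Σ_{k=1}^j ε_k² for all j = 1,…,m (quadratic order of convergence). -/

import Mathlib

open scoped InnerProductSpace

variable {H : Type*} [NormedAddCommGroup H] [InnerProductSpace ℂ H] [CompleteSpace H]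

/-- `Fapp A L j t` : the `j`-th min-max value of `‖(A-t)u‖/‖u‖` over
`j`-dimensional subspaces of `L`. -/
noncomputable def Fapp (A : H →L[ℂ] H) (L : Submodule ℂ H) (j : ℕ) (t : ℝ) : ℝ :=
  sInf {r : ℝ | 0 ≤ r ∧ ∃ V : Submodule ℂ H, V ≤ L ∧ Module.finrank ℂ V = j ∧
    ∀ u ∈ V, ‖A u - (t : ℂ) • u‖ ≤ r * ‖u‖}

/-- `dd A j t` : the `j`-th min-max value of `‖(A-t)u‖/‖u‖` over all
`j`-dimensional subspaces of the space. -/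
noncomputable def dd (A : H →L[ℂ] H) (j : ℕ) (t : ℝ) : ℝ :=
  sInf {r : ℝ | 0 ≤ r ∧ ∃ V : Submodule ℂ H, Module.finrank ℂ V = j ∧
    ∀ u ∈ V, ‖A u - (t : ℂ) • u‖ ≤ r * ‖u‖}

/-- `tr 1_{[a,b]}(A) ≥ j` : there is a `j`-dimensional subspace on which the
quadratic form of `(A-a)(A-b)` is non-positive. -/
def countGeIcc (A : H →L[ℂ] H) (a b : ℝ) (j : ℕ) : Prop :=
  ∃ V : Submodule ℂ H, Module.finrank ℂ V = j ∧
    ∀ u ∈ V, (inner ℂ (A u - (a : ℂ) • u) (A u - (b : ℂ) • u) : ℂ).re ≤ 0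

/-- `tr 1_{(a,b]}(A) ≥ j`. -/
def countGeIoc (A : H →L[ℂ] H) (a b : ℝ) (j : ℕ) : Prop :=
  ∃ V : Submodule ℂ H, Module.finrank ℂ V = j ∧
    (∀ u ∈ V, (inner ℂ (A u - (a : ℂ) • u) (A u - (b : ℂ) • u) : ℂ).re ≤ 0) ∧
    V ⊓ LinearMap.ker ((A - (a : ℂ) • (1 : H →L[ℂ] H) : H →L[ℂ] H) : H →ₗ[ℂ] H) = ⊥

/-- `tr 1_{[a,b)}(A) ≥ j`. -/
def countGeIco (A : H →L[ℂ] H) (a b : ℝ) (j : ℕ) : Prop :=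
  ∃ V : Submodule ℂ H, Module.finrank ℂ V = j ∧
    (∀ u ∈ V, (inner ℂ (A u - (a : ℂ) • u) (A u - (b : ℂ) • u) : ℂ).re ≤ 0) ∧
    V ⊓ LinearMap.ker ((A - (b : ℂ) • (1 : H →L[ℂ] H) : H →L[ℂ] H) : H →ₗ[ℂ] H) = ⊥

/-- `nminus A j t` : the `j`-th spectral point of `A` to the left of `t`,
counting multiplicities, i.e. `sup {s < t : tr 1_{(s,t]}(A) ≥ j}`. -/
noncomputable def nminus (A : H →L[ℂ] H) (j : ℕ) (t : ℝ) : ℝ :=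
  sSup {s : ℝ | s < t ∧ countGeIoc A s t j}

/-- `nplus A j t` : the `j`-th spectral point of `A` to the right of `t`. -/
noncomputable def nplus (A : H →L[ℂ] H) (j : ℕ) (t : ℝ) : ℝ :=
  sInf {s : ℝ | t < s ∧ countGeIco A t s j}

/-- The real spectrum of `A`. -/
def specRe (A : H →L[ℂ] H) : Set ℝ := {x : ℝ | (x : ℂ) ∈ spectrum ℂ A}


section AuxStmt15

variable (H) in
private lemma aux15_norm_sq_sum {ι : Type*} [Fintype ι] {v : ι → H} (hv : Orthonormal ℂ v)
    (c : ι → ℂ) : ‖∑ i, c i • v i‖ ^ 2 = ∑ i, ‖c i‖ ^ 2 := by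
  have h := hv.inner_sum c c Finset.univ
  have h2 : ((⟪∑ i, c i • v i, ∑ i, c i • v i⟫_ℂ).re : ℝ) = ‖∑ i, c i • v i‖ ^ 2 :=
    inner_self_eq_norm_sq (𝕜 := ℂ) _
  rw [← h2, h, Complex.re_sum]
  refine Finset.sum_congr rfl fun i _ => ?_
  rw [Complex.conj_mul']
  norm_cast

private lemma aux15_dd_nonneg (A : H →L[ℂ] H) (j : ℕ) (t : ℝ) : 0 ≤ dd A j t :=
  Real.sInf_nonneg (fun _ hr => hr.1)

private lemma aux15_dd_bddBelow (A : H →L[ℂ] H) (j : ℕ) (t : ℝ) :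
    BddBelow {r : ℝ | 0 ≤ r ∧ ∃ V : Submodule ℂ H, Module.finrank ℂ V = j ∧
      ∀ u ∈ V, ‖A u - (t : ℂ) • u‖ ≤ r * ‖u‖} :=
  ⟨0, fun _ hr => hr.1⟩

private lemma aux15_dd_le (A : H →L[ℂ] H) (t : ℝ) (v : H) :
    dd A 1 t * ‖v‖ ≤ ‖A v - (t : ℂ) • v‖ := by
  rcases eq_or_ne v 0 with rfl | hv
  · simp
  have hv' : (0:ℝ) < ‖v‖ := norm_pos_iff.mpr hv
  have hmem : ‖A v - (t : ℂ) • v‖ / ‖v‖ ∈ {r : ℝ | 0 ≤ r ∧ ∃ V : Submodule ℂ H,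
      Module.finrank ℂ V = 1 ∧ ∀ u ∈ V, ‖A u - (t : ℂ) • u‖ ≤ r * ‖u‖} := by
    refine ⟨div_nonneg (norm_nonneg _) (norm_nonneg _), Submodule.span ℂ {v},
      finrank_span_singleton hv, ?_⟩
    intro u hu
    obtain ⟨a, rfl⟩ := Submodule.mem_span_singleton.mp hu
    have h1 : A (a • v) - (t : ℂ) • (a • v) = a • (A v - (t : ℂ) • v) := by
      rw [map_smul, smul_sub, smul_comm]
    rw [h1, norm_smul, norm_smul]
    rw [div_mul_eq_mul_div, mul_comm ‖a‖, mul_div_assoc, mul_div_assoc, div_self (ne_of_gt hv'),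
      mul_one]
  have h := csInf_le (aux15_dd_bddBelow A 1 t) hmem
  calc dd A 1 t * ‖v‖ ≤ ‖A v - (t : ℂ) • v‖ / ‖v‖ * ‖v‖ :=
        mul_le_mul_of_nonneg_right h (norm_nonneg v)
    _ = ‖A v - (t : ℂ) • v‖ := div_mul_cancel₀ _ (ne_of_gt hv')

private lemma aux15_dd_mono (A : H →L[ℂ] H) (t : ℝ) {k j : ℕ} (hkj : k ≤ j)
    (hne : {r : ℝ | 0 ≤ r ∧ ∃ V : Submodule ℂ H, Module.finrank ℂ V = j ∧
      ∀ u ∈ V, ‖A u - (t : ℂ) • u‖ ≤ r * ‖u‖}.Nonempty) :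
    dd A k t ≤ dd A j t := by
  rcases Nat.eq_zero_or_pos j with rfl | hj
  · obtain rfl : k = 0 := Nat.le_zero.mp hkj
    exact le_rfl
  refine le_csInf hne ?_
  rintro r ⟨hr0, V, hfr, hb⟩
  haveI : FiniteDimensional ℂ V := FiniteDimensional.of_finrank_pos (hfr ▸ hj)
  let b := Module.finBasis ℂ V
  let f : Fin k → H := fun i => (b (Fin.castLE (by omega : k ≤ Module.finrank ℂ V) i) : H)
  have hli : LinearIndependent ℂ f := by
    have h1 : LinearIndependent ℂ (fun i => ((b i : V) : H)) :=
      b.linearIndependent.map' V.subtype (Submodule.ker_subtype V)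
    exact h1.comp _ (Fin.castLE_injective _)
  have hWV : Submodule.span ℂ (Set.range f) ≤ V := by
    rw [Submodule.span_le]
    rintro x ⟨i, rfl⟩
    exact (b _).2
  have hWfr : Module.finrank ℂ (Submodule.span ℂ (Set.range f)) = k := by
    rw [finrank_span_eq_card hli, Fintype.card_fin]
  exact csInf_le (aux15_dd_bddBelow A k t) ⟨hr0, _, hWfr, fun u hu => hb u (hWV hu)⟩

/-- If there is an orthonormal family of size `q`, the defining set of `dd A q t`
is nonempty. -/
private lemma aux15_dd_set_nonempty (A : H →L[ℂ] H) (t : ℝ) {m q : ℕ} (hq : q ≤ m)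
    (φ : Fin m → H) (hφ : Orthonormal ℂ φ) :
    {r : ℝ | 0 ≤ r ∧ ∃ V : Submodule ℂ H, Module.finrank ℂ V = q ∧
      ∀ u ∈ V, ‖A u - (t : ℂ) • u‖ ≤ r * ‖u‖}.Nonempty := by
  set Bc : H →L[ℂ] H := A - (t : ℂ) • (1 : H →L[ℂ] H) with hBcdef
  have hBc : ∀ u : H, Bc u = A u - (t : ℂ) • u := fun u => by
    simp [hBcdef, ContinuousLinearMap.sub_apply]
  refine ⟨‖Bc‖, norm_nonneg _, Submodule.span ℂ
    (Set.range (φ ∘ Fin.castLE hq)), ?_, ?_⟩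
  · rw [finrank_span_eq_card
      ((hφ.comp (Fin.castLE hq) (Fin.castLE_injective hq)).linearIndependent),
      Fintype.card_fin]
  · intro u _
    rw [← hBc]
    exact Bc.le_opNorm u

end AuxStmt15

set_option maxHeartbeats 1000000 in
/-- quadratic convergence. If `t ∉ spec(A)` and
`Σ ε_j² < 𝔡_1(t)²/6` where `ε_j = ‖(A-t)(w_j - φ_j)‖`, `w_j ∈ L` and `φ_j` are
orthonormal eigenvectors of `|A-t|` with `|A-t|φ_j = 𝔡_j(t)φ_j`, then
`F_L^j(t) - 𝔡_j(t) ≤ 3 (𝔡_j(t)/𝔡_1(t)²) Σ_{k=1}^j ε_k²`. -/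
theorem stmt_15 (A : H →L[ℂ] H) (hA : IsSelfAdjoint A)
    (L : Submodule ℂ H) [FiniteDimensional ℂ L] (t : ℝ)
    (ht : (t : ℂ) ∉ spectrum ℂ A)
    (m : ℕ) (φ w : Fin m → H) (hφon : Orthonormal ℂ φ)
    (hwL : ∀ j, w j ∈ L)
    (hφeig : ∀ j : Fin m,
      A (A (φ j) - (t : ℂ) • φ j) - (t : ℂ) • (A (φ j) - (t : ℂ) • φ j) =
        (((dd A (j.1 + 1) t : ℝ) : ℂ) ^ 2) • φ j)
    (εv : Fin m → ℝ)
    (hε : ∀ j, ‖A (w j - φ j) - (t : ℂ) • (w j - φ j)‖ ≤ εv j)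
    (hsum : ∑ j, εv j ^ 2 < dd A 1 t ^ 2 / 6) :
    ∀ j : Fin m, Fapp A L (j.1 + 1) t - dd A (j.1 + 1) t ≤
      3 * dd A (j.1 + 1) t / dd A 1 t ^ 2 *
        ∑ k ∈ Finset.univ.filter (fun k => k ≤ j), εv k ^ 2 := by
  classical
  -- basic setup
  set Bc : H →L[ℂ] H := A - (t : ℂ) • (1 : H →L[ℂ] H) with hBcdef
  have hBc : ∀ u : H, Bc u = A u - (t : ℂ) • u := fun u => by
    simp [hBcdef, ContinuousLinearMap.sub_apply]
  have hsa : ∀ x y : H, ⟪Bc x, y⟫_ℂ = ⟪x, Bc y⟫_ℂ := by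
    intro x y
    have hAs := (ContinuousLinearMap.isSelfAdjoint_iff_isSymmetric.mp hA) x y
    simp only [hBcdef, ContinuousLinearMap.sub_apply, ContinuousLinearMap.smul_apply,
      ContinuousLinearMap.one_apply, inner_sub_left, inner_sub_right,
      inner_smul_left, inner_smul_right, Complex.conj_ofReal]
    rw [show ⟪A x, y⟫_ℂ = ⟪x, A y⟫_ℂ from hAs]
  have hunit : IsUnit Bc := by
    have h := spectrum.notMem_iff.mp ht
    rw [Algebra.algebraMap_eq_smul_one] at h
    simpa [hBcdef, neg_sub] using h.neg
  obtain ⟨U, hU⟩ := hunit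
  set Binv : H →L[ℂ] H := (↑U⁻¹ : H →L[ℂ] H) with hBinvdef
  have hBi1 : ∀ x, Binv (Bc x) = x := by
    intro x
    have h1 : ((↑U⁻¹ * ↑U : H →L[ℂ] H)) x = x := by
      rw [U.inv_mul]; rfl
    rw [ContinuousLinearMap.mul_apply, hU] at h1
    exact h1
  have hBi2 : ∀ x, Bc (Binv x) = x := by
    intro x
    have h1 : ((↑U * ↑U⁻¹ : H →L[ℂ] H)) x = x := by
      rw [U.mul_inv]; rfl
    rw [ContinuousLinearMap.mul_apply, hU] at h1
    exact h1
  have hεnn : ∀ k, 0 ≤ εv k := fun k => le_trans (norm_nonneg _) (hε k)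
  have hd1nn : 0 ≤ dd A 1 t := aux15_dd_nonneg A 1 t
  have hd1pos : 0 < dd A 1 t := by
    rcases lt_or_eq_of_le hd1nn with h | h
    · exact h
    · exfalso
      have h0 : (0:ℝ) ≤ ∑ j, εv j ^ 2 := Finset.sum_nonneg fun k _ => sq_nonneg _
      rw [← h] at hsum
      norm_num at hsum
      linarith
  intro j
  set n : ℕ := j.1 + 1 with hn
  have hnm : n ≤ m := j.2
  set ι : Fin n → Fin m := Fin.castLE hnm with hι
  have hιinj : Function.Injective ι := Fin.castLE_injective hnm
  have hψ : Orthonormal ℂ (φ ∘ ι) := hφon.comp ι hιinj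
  -- monotonicity facts
  have hmono : ∀ k : Fin n, dd A (k.1 + 1) t ≤ dd A n t :=
    fun k => aux15_dd_mono A t (Nat.succ_le_of_lt k.2)
      (aux15_dd_set_nonempty A t hnm φ hφon)
  have hge1 : ∀ k : Fin n, dd A 1 t ≤ dd A (k.1 + 1) t :=
    fun k => aux15_dd_mono A t (Nat.one_le_iff_ne_zero.mpr (Nat.succ_ne_zero _))
      (aux15_dd_set_nonempty A t (Nat.succ_le_of_lt (lt_of_lt_of_le k.2 hnm)) φ hφon)
  set D : Fin n → ℝ := fun k => dd A (k.1 + 1) t with hD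
  have hDpos : ∀ k, 0 < D k := fun k => lt_of_lt_of_le hd1pos (hge1 k)
  have hdn : 0 ≤ dd A n t := aux15_dd_nonneg A n t
  -- the error quantity
  set E2 : ℝ := ∑ k : Fin n, εv (ι k) ^ 2 with hE2def
  have hE2nn : 0 ≤ E2 := Finset.sum_nonneg fun k _ => sq_nonneg _
  have hE2le : E2 ≤ ∑ k, εv k ^ 2 := by
    have hmap : ∑ k : Fin n, εv (ι k) ^ 2 = ∑ k ∈ Finset.univ.map ⟨ι, hιinj⟩, εv k ^ 2 :=
      (Finset.sum_map Finset.univ ⟨ι, hιinj⟩ (fun k => εv k ^ 2)).symm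
    rw [hE2def, hmap]
    exact Finset.sum_le_sum_of_subset_of_nonneg (Finset.subset_univ _)
      (fun k _ _ => sq_nonneg _)
  have hθ6 : E2 / dd A 1 t ^ 2 < 1 / 6 := by
    rw [div_lt_iff₀ (by positivity)]
    calc E2 ≤ ∑ k, εv k ^ 2 := hE2le
      _ < dd A 1 t ^ 2 / 6 := hsum
      _ = 1 / 6 * dd A 1 t ^ 2 := by ring
  have hθnn : 0 ≤ E2 / dd A 1 t ^ 2 := by positivity
  -- subspaces and the projection operator
  set P : Submodule ℂ H := Submodule.span ℂ (Set.range (φ ∘ ι)) with hP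
  set K : Submodule ℂ H := L.map (Bc : H →ₗ[ℂ] H) with hK
  haveI : FiniteDimensional ℂ K := Module.Finite.map L (Bc : H →ₗ[ℂ] H)
  haveI : CompleteSpace K := FiniteDimensional.complete ℂ K
  set T : H →L[ℂ] H := Binv ∘L (K.subtypeL ∘L K.orthogonalProjectionOnto) ∘L Bc with hT
  have hTapp : ∀ p : H, T p = Binv ((K.orthogonalProjectionOnto (Bc p) : H)) := fun p => rfl
  have hBTapp : ∀ p : H, Bc (T p) = (K.orthogonalProjectionOnto (Bc p) : H) := fun p => by
    rw [hTapp, hBi2]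
  -- eigenvector facts
  have heig : ∀ k : Fin n, Bc (Bc (φ (ι k))) = (((D k : ℝ) : ℂ) ^ 2) • φ (ι k) := by
    intro k
    have h := hφeig (ι k)
    rw [hBc, hBc]
    exact h
  -- the key pointwise estimate
  have key : ∀ p ∈ P, ‖Bc (T p)‖ ^ 2 ≤ (dd A n t) ^ 2 * ‖p‖ ^ 2 ∧
      (1 - 2 * (E2 / dd A 1 t ^ 2)) * ‖p‖ ^ 2 ≤ ‖T p‖ ^ 2 := by
    intro p hp
    obtain ⟨a, ha⟩ := (Submodule.mem_span_range_iff_exists_fun ℂ).mp hp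
    set s : ℝ := ∑ k : Fin n, ‖a k‖ ^ 2 with hs
    have hps : ‖p‖ ^ 2 = s := by rw [← ha]; exact aux15_norm_sq_sum H hψ a
    have hsnn : 0 ≤ s := Finset.sum_nonneg fun k _ => sq_nonneg _
    have hD0 : ∀ k : Fin n, ((D k : ℝ) : ℂ) ≠ 0 := fun k => by
      exact_mod_cast (hDpos k).ne'
    have hBinner : ∀ k l : Fin n, ⟪Bc (φ (ι k)), Bc (φ (ι l))⟫_ℂ =
        if k = l then ((D l : ℝ) : ℂ) ^ 2 else 0 := by
      intro k l
      rw [hsa, heig l, inner_smul_right]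
      have hon : ⟪φ (ι k), φ (ι l)⟫_ℂ = if k = l then 1 else 0 :=
        orthonormal_iff_ite.mp hψ k l
      rw [hon]
      by_cases h : k = l <;> simp [h]
    set ξ : Fin n → H := fun k => (((D k : ℝ) : ℂ))⁻¹ • Bc (φ (ι k)) with hξdef
    have hξ : Orthonormal ℂ ξ := by
      rw [orthonormal_iff_ite]
      intro k l
      simp only [hξdef, inner_smul_left, inner_smul_right, hBinner k l, map_inv₀,
        Complex.conj_ofReal]
      by_cases h : k = l
      · subst h
        rw [if_pos rfl, if_pos rfl]
        field_simp
        rw [div_self (hD0 k)]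
      · rw [if_neg h, if_neg h, mul_zero, mul_zero]
    have hBp : Bc p = ∑ k, (a k * ((D k : ℝ) : ℂ)) • ξ k := by
      rw [← ha, map_sum]
      refine Finset.sum_congr rfl fun k _ => ?_
      rw [map_smul, hξdef, smul_smul, mul_assoc, mul_inv_cancel₀ (hD0 k), mul_one]
      rfl
    have hBp2 : ‖Bc p‖ ^ 2 ≤ (dd A n t) ^ 2 * s := by
      rw [hBp, aux15_norm_sq_sum H hξ, hs, Finset.mul_sum]
      refine Finset.sum_le_sum fun k _ => ?_
      rw [norm_mul, Complex.norm_real, Real.norm_eq_abs, abs_of_nonneg (hDpos k).le]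
      have hD2 : D k ^ 2 ≤ dd A n t ^ 2 := pow_le_pow_left₀ (hDpos k).le (hmono k) 2
      nlinarith [sq_nonneg ‖a k‖, norm_nonneg (a k), hD2]
    have herr' : ∀ (c : Fin n → ℂ) (x : Fin n → H), (∀ k, ‖Bc (x k)‖ ≤ εv (ι k)) →
        ‖Bc (∑ k, c k • x k)‖ ≤ ∑ k, ‖c k‖ * εv (ι k) := by
      intro c x hx
      rw [map_sum]
      refine (norm_sum_le _ _).trans (Finset.sum_le_sum fun k _ => ?_)
      rw [map_smul, norm_smul]
      exact mul_le_mul_of_nonneg_left (hx k) (norm_nonneg _)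
    have herrφw : ∀ k : Fin n, ‖Bc (φ (ι k) - w (ι k))‖ ≤ εv (ι k) := by
      intro k
      rw [show φ (ι k) - w (ι k) = -(w (ι k) - φ (ι k)) from (neg_sub _ _).symm, map_neg,
        norm_neg, hBc]
      exact hε (ι k)
    set S1 : ℝ := ∑ k : Fin n, ‖a k‖ * εv (ι k) with hS1
    have hS1nn : 0 ≤ S1 :=
      Finset.sum_nonneg fun k _ => mul_nonneg (norm_nonneg _) (hεnn _)
    have hCS : S1 ^ 2 ≤ s * E2 :=
      Finset.sum_mul_sq_le_sq_mul_sq Finset.univ (fun k => ‖a k‖) (fun k => εv (ι k))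
    set pw : H := ∑ k, a k • w (ι k) with hpw
    have hpwK : Bc pw ∈ K :=
      ⟨pw, Submodule.sum_mem _ fun k _ => Submodule.smul_mem _ _ (hwL (ι k)), rfl⟩
    have hppw : p - pw = ∑ k, a k • (φ (ι k) - w (ι k)) := by
      rw [← ha, hpw, ← Finset.sum_sub_distrib]
      exact Finset.sum_congr rfl fun k _ => (smul_sub _ _ _).symm
    have hBppw : ‖Bc p - Bc pw‖ ≤ S1 := by
      rw [← map_sub, hppw]
      exact herr' a _ herrφw
    obtain ⟨y, hy⟩ : ∃ y : H, y = ((K.orthogonalProjectionOnto (Bc p) : H)) := ⟨_, rfl⟩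
    have hr : ‖Bc p - y‖ ≤ S1 := by
      rw [hy]
      have hbdd : BddBelow (Set.range fun x : K => ‖Bc p - (x : H)‖) :=
        ⟨0, by rintro z ⟨x, rfl⟩; exact norm_nonneg _⟩
      have hle : (⨅ x : K, ‖Bc p - (x : H)‖) ≤ ‖Bc p - Bc pw‖ :=
        ciInf_le hbdd ⟨Bc pw, hpwK⟩
      rw [Submodule.coe_orthogonalProjectionOnto_apply, Submodule.starProjection_minimal (U := K) (Bc p)]
      exact hle.trans hBppw
    have hyle : ‖y‖ ≤ ‖Bc p‖ := by
      rw [hy]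
      have h1 : ‖K.orthogonalProjectionOnto (Bc p)‖ ≤ ‖K.orthogonalProjectionOnto‖ * ‖Bc p‖ :=
        (K.orthogonalProjectionOnto).le_opNorm _
      have h2 : ‖K.orthogonalProjectionOnto‖ ≤ 1 := Submodule.orthogonalProjectionOnto_norm_le K
      have h3 : ‖((K.orthogonalProjectionOnto (Bc p) : H))‖ = ‖K.orthogonalProjectionOnto (Bc p)‖ := rfl
      rw [h3]
      nlinarith [norm_nonneg (Bc p), norm_nonneg (K.orthogonalProjectionOnto (Bc p))]
    constructor
    · rw [hBTapp, ← hy, hps]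
      nlinarith [hyle, norm_nonneg (Bc p), norm_nonneg y, hBp2]
    -- quadratic estimate
    set z : H := ∑ k, (a k / (((D k : ℝ) : ℂ)) ^ 2) • φ (ι k) with hz
    have hBz : Bc (Bc z) = p := by
      rw [hz, map_sum, map_sum, ← ha]
      refine Finset.sum_congr rfl fun k _ => ?_
      rw [map_smul, map_smul, heig k, smul_smul, div_mul_cancel₀ _ (pow_ne_zero 2 (hD0 k))]
      rfl
    set g : H := ∑ k, (a k / (((D k : ℝ) : ℂ)) ^ 2) • w (ι k) with hg
    have hgL : g ∈ L := Submodule.sum_mem _ fun k _ => Submodule.smul_mem _ _ (hwL (ι k))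
    have hzg : z - g = ∑ k, (a k / (((D k : ℝ) : ℂ)) ^ 2) • (φ (ι k) - w (ι k)) := by
      rw [hz, hg, ← Finset.sum_sub_distrib]
      exact Finset.sum_congr rfl fun k _ => (smul_sub _ _ _).symm
    have hBzg : ‖Bc (z - g)‖ ≤ 1 / dd A 1 t ^ 2 * S1 := by
      rw [hzg]
      refine (herr' _ _ herrφw).trans ?_
      rw [hS1, Finset.mul_sum]
      refine Finset.sum_le_sum fun k _ => ?_
      have h1 : ‖a k / (((D k : ℝ) : ℂ)) ^ 2‖ = ‖a k‖ / (D k) ^ 2 := by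
        rw [norm_div, norm_pow, Complex.norm_real, Real.norm_eq_abs,
          abs_of_nonneg (hDpos k).le]
      rw [h1]
      have h2 : ‖a k‖ / (D k) ^ 2 ≤ ‖a k‖ / dd A 1 t ^ 2 := by
        gcongr
        exact hge1 k
      calc ‖a k‖ / D k ^ 2 * εv (ι k) ≤ ‖a k‖ / dd A 1 t ^ 2 * εv (ι k) :=
            mul_le_mul_of_nonneg_right h2 (hεnn _)
        _ = 1 / dd A 1 t ^ 2 * (‖a k‖ * εv (ι k)) := by ring
    have horthg : ⟪Bc g, Bc p - y⟫_ℂ = 0 := by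
      rw [hy, inner_eq_zero_symm]
      exact Submodule.starProjection_inner_eq_zero (K := K) (Bc p) (Bc g) ⟨g, hgL, rfl⟩
    have hBpt : Bc (p - T p) = Bc p - y := by rw [map_sub, hBTapp, ← hy]
    have hpe : ⟪p, p - T p⟫_ℂ = ⟪Bc (z - g), Bc p - y⟫_ℂ := by
      calc ⟪p, p - T p⟫_ℂ = ⟪Bc (Bc z), p - T p⟫_ℂ := by rw [hBz]
        _ = ⟪Bc z, Bc (p - T p)⟫_ℂ := hsa _ _
        _ = ⟪Bc z, Bc p - y⟫_ℂ := by rw [hBpt]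
        _ = ⟪Bc z - Bc g, Bc p - y⟫_ℂ := by
            rw [inner_sub_left, horthg, sub_zero]
        _ = ⟪Bc (z - g), Bc p - y⟫_ℂ := by rw [map_sub]
    have habs : ‖⟪p, p - T p⟫_ℂ‖ ≤ s * E2 / dd A 1 t ^ 2 := by
      rw [hpe]
      calc ‖⟪Bc (z - g), Bc p - y⟫_ℂ‖ ≤ ‖Bc (z - g)‖ * ‖Bc p - y‖ :=
            norm_inner_le_norm _ _
        _ ≤ (1 / dd A 1 t ^ 2 * S1) * S1 :=
            mul_le_mul hBzg hr (norm_nonneg _) (by positivity)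
        _ = S1 ^ 2 / dd A 1 t ^ 2 := by ring
        _ ≤ s * E2 / dd A 1 t ^ 2 := by gcongr
    have hre : (⟪p, p - T p⟫_ℂ).re ≤ s * E2 / dd A 1 t ^ 2 := by
      have h1 := Complex.re_le_norm (⟪p, p - T p⟫_ℂ)
      linarith
    have hsub : ‖T p‖ ^ 2 = ‖p‖ ^ 2 - 2 * (⟪p, p - T p⟫_ℂ).re + ‖p - T p‖ ^ 2 := by
      have h := norm_sub_sq (𝕜 := ℂ) p (p - T p)
      rw [sub_sub_cancel] at h
      exact h
    rw [hsub, hps]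
    have hring : (1 - 2 * (E2 / dd A 1 t ^ 2)) * s = s - 2 * (s * E2 / dd A 1 t ^ 2) := by
      ring
    have hnn2 : (0:ℝ) ≤ ‖p - T p‖ ^ 2 := sq_nonneg _
    linarith
  -- conclusion
  have hone : 0 < 1 - 2 * (E2 / dd A 1 t ^ 2) := by linarith
  set Tl : H →ₗ[ℂ] H := (T : H →ₗ[ℂ] H) with hTl
  set V : Submodule ℂ H := P.map Tl with hV
  have hinj : Function.Injective (Tl.comp P.subtype) := by
    intro x y' hxy
    have hx : ((x : H) - (y' : H)) ∈ P := sub_mem x.2 y'.2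
    have h0 : T ((x : H) - (y' : H)) = 0 := by
      have h1 : T (x : H) = T (y' : H) := hxy
      rw [map_sub, h1, sub_self]
    have h2 := (key _ hx).2
    rw [h0, norm_zero] at h2
    have hp0 : ‖(x : H) - (y' : H)‖ ^ 2 = 0 := by nlinarith [sq_nonneg ‖(x : H) - (y' : H)‖]
    have h3 : (x : H) - (y' : H) = 0 := by
      rw [pow_eq_zero_iff (two_ne_zero)] at hp0
      exact norm_eq_zero.mp hp0
    exact Subtype.ext (sub_eq_zero.mp h3)
  have hPfr : Module.finrank ℂ P = n := by
    rw [hP, finrank_span_eq_card hψ.linearIndependent, Fintype.card_fin]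
  have hfrV : Module.finrank ℂ V = n := by
    have h1 := LinearMap.finrank_range_of_inj hinj
    rw [LinearMap.range_comp, Submodule.range_subtype, hPfr] at h1
    exact h1
  have hVL : V ≤ L := by
    rintro x ⟨p, hp, rfl⟩
    obtain ⟨l, hl, hlp⟩ := (K.orthogonalProjectionOnto (Bc p)).2
    show T p ∈ L
    rw [hTapp p, ← hlp, ContinuousLinearMap.coe_coe, hBi1]
    exact hl
  set ρ : ℝ := dd A n t + 3 * dd A n t / dd A 1 t ^ 2 * E2 with hρ
  have hρeq : ρ = dd A n t * (1 + 3 * (E2 / dd A 1 t ^ 2)) := by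
    rw [hρ]; field_simp
  have hρnn : 0 ≤ ρ := by
    rw [hρeq]
    exact mul_nonneg hdn (by positivity)
  have hbound : ∀ u ∈ V, ‖A u - (t : ℂ) • u‖ ≤ ρ * ‖u‖ := by
    rintro u ⟨p, hp, rfl⟩
    obtain ⟨h1, h2⟩ := key p hp
    rw [← hBc]
    show ‖Bc (T p)‖ ≤ ρ * ‖T p‖
    have hθ16 : E2 / dd A 1 t ^ 2 ≤ 1 / 6 := le_of_lt hθ6
    have hfac : 1 ≤ (1 + 3 * (E2 / dd A 1 t ^ 2)) ^ 2 * (1 - 2 * (E2 / dd A 1 t ^ 2)) := by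
      nlinarith [hθnn, hθ16, mul_nonneg hθnn hθnn,
        mul_nonneg (mul_nonneg hθnn hθnn) hθnn,
        mul_nonneg (mul_nonneg hθnn hθnn) (sub_nonneg.mpr hθ16),
        mul_nonneg hθnn (sub_nonneg.mpr hθ16)]
    have hb2 : dd A n t ^ 2 * ‖p‖ ^ 2 ≤ ρ ^ 2 * ‖T p‖ ^ 2 := by
      rw [hρeq, mul_pow]
      calc dd A n t ^ 2 * ‖p‖ ^ 2
          ≤ dd A n t ^ 2 * ((1 + 3 * (E2 / dd A 1 t ^ 2)) ^ 2 *
            ((1 - 2 * (E2 / dd A 1 t ^ 2)) * ‖p‖ ^ 2)) := by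
            nlinarith [sq_nonneg (dd A n t), sq_nonneg ‖p‖, hfac]
        _ ≤ dd A n t ^ 2 * ((1 + 3 * (E2 / dd A 1 t ^ 2)) ^ 2 * ‖T p‖ ^ 2) := by
            have hmul : (0:ℝ) ≤ dd A n t ^ 2 * (1 + 3 * (E2 / dd A 1 t ^ 2)) ^ 2 := by positivity
            nlinarith [h2]
        _ = dd A n t ^ 2 * (1 + 3 * (E2 / dd A 1 t ^ 2)) ^ 2 * ‖T p‖ ^ 2 := by ring
    nlinarith [h1, hb2, mul_nonneg hρnn (norm_nonneg (T p)), norm_nonneg (Bc (T p)),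
      sq_nonneg (‖Bc (T p)‖ + ρ * ‖T p‖)]
  have hFapp : Fapp A L n t ≤ ρ :=
    csInf_le ⟨0, fun r hr => hr.1⟩ ⟨hρnn, V, hVL, hfrV, hbound⟩
  have hE2eq : E2 = ∑ k ∈ Finset.univ.filter (fun k => k ≤ j), εv k ^ 2 := by
    rw [hE2def]
    refine Finset.sum_bij' (fun (k : Fin n) _ => ι k)
      (fun (k : Fin m) hk => (⟨k.1, by
        have := (Finset.mem_filter.mp hk).2
        omega⟩ : Fin n)) ?_ ?_ ?_ ?_ ?_
    · intro k _
      refine Finset.mem_filter.mpr ⟨Finset.mem_univ _, ?_⟩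
      show (ι k).1 ≤ j.1
      have := k.2
      simp only [hι, Fin.coe_castLE]
      omega
    · intro k _
      exact Finset.mem_univ _
    · intro k _
      ext
      simp [hι]
    · intro k _
      ext
      simp [hι]
    · intro k _
      rfl
  show Fapp A L n t - dd A n t ≤ 3 * dd A n t / dd A 1 t ^ 2 *
    ∑ k ∈ Finset.univ.filter (fun k => k ≤ j), εv k ^ 2
  rw [← hE2eq]
  rw [hρ] at hFapp
  linarith
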